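/- For the explicit discretization z^{k+1} = z^k + ε(J∇H(z^k) + z⋆ − z^k) with 2ε = (L² + L/μ)⁻¹, one has H(z^{k+1}) ≤ (1 − ε·μ/L)·H(z^k), hence linear convergence H(z^k) ≤ (1 − ε·μ/L)^k·H(z^0). -/

import Mathlib

open RealInnerProductSpace

/-- The standard symplectic matrix `J` on `ℝ^{2n}`: `J (x, p) = (p, -x)`. -/
def Jmap (n : ℕ) (v : EuclideanSpace ℝ (Fin n ⊕ Fin n)) :
    EuclideanSpace ℝ (Fin n ⊕ Fin n) :=
  WithLp.toLp 2 (fun i => Sum.elim (fun a => v (Sum.inr a)) (fun a => -(v (Sum.inl a))) i)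

section Aux

open Set Filter Topology

variable {E : Type*} [NormedAddCommGroup E] [InnerProductSpace ℝ E] [CompleteSpace E]

lemma line_hasDerivAt {f : E → ℝ} {g : E → E}
    (hg : ∀ w, HasGradientAt f (g w) w) (x y : E) (t : ℝ) :
    HasDerivAt (fun t : ℝ => f (x + t • (y - x)))
      ⟪g (x + t • (y - x)), y - x⟫ t := by
  have hline : HasDerivAt (fun t : ℝ => x + t • (y - x)) (y - x) t := by
    simpa using ((hasDerivAt_id t).smul_const (y - x)).const_add x
  have := ((hg (x + t • (y - x))).hasFDerivAt).comp_hasDerivAt t hline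
  simpa [InnerProductSpace.toDual_apply_apply, Function.comp_def] using this

lemma descent_lemma {f : E → ℝ} {g : E → E} {L : ℝ} (hL : 0 ≤ L)
    (hg : ∀ w, HasGradientAt f (g w) w)
    (hLip : LipschitzWith (Real.toNNReal L) g) (x y : E) :
    f y ≤ f x + ⟪g x, y - x⟫ + L / 2 * ‖y - x‖ ^ 2 := by
  set M : ℝ := ‖y - x‖ ^ 2 with hM
  set χ : ℝ → ℝ := fun t => f (x + t • (y - x)) - t * ⟪g x, y - x⟫ - L * t ^ 2 / 2 * M
    with hχ
  have hder : ∀ t : ℝ, HasDerivAt χ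
      (⟪g (x + t • (y - x)), y - x⟫ - ⟪g x, y - x⟫ - L * t * M) t := by
    intro t
    have h1 := line_hasDerivAt hg x y t
    have h2 : HasDerivAt (fun t : ℝ => t * ⟪g x, y - x⟫) ⟪g x, y - x⟫ t := by
      simpa using (hasDerivAt_id t).mul_const ⟪g x, y - x⟫
    have h3 : HasDerivAt (fun t : ℝ => L * t ^ 2 / 2 * M) (L * t * M) t := by
      have : HasDerivAt (fun t : ℝ => t ^ 2) (2 * t) t := by
        simpa using hasDerivAt_pow 2 t
      have := ((this.const_mul L).div_const 2).mul_const M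
      exact this.congr_deriv (by ring)
    exact (h1.sub h2).sub h3
  have hanti : AntitoneOn χ (Icc (0:ℝ) 1) := by
    apply antitoneOn_of_deriv_nonpos (convex_Icc 0 1)
    · exact Continuous.continuousOn (by
        have : Differentiable ℝ χ := fun t => (hder t).differentiableAt
        exact this.continuous)
    · intro t _
      exact (hder t).differentiableAt.differentiableWithinAt
    · intro t ht
      rw [interior_Icc] at ht
      rw [(hder t).deriv]
      have hcs : ⟪g (x + t • (y - x)) - g x, y - x⟫ ≤
          ‖g (x + t • (y - x)) - g x‖ * ‖y - x‖ := real_inner_le_norm _ _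
      have hlip : ‖g (x + t • (y - x)) - g x‖ ≤ L * (t * ‖y - x‖) := by
        have := hLip.dist_le_mul (x + t • (y - x)) x
        rw [dist_eq_norm, dist_eq_norm] at this
        have h' : (Real.toNNReal L : ℝ) = L := Real.coe_toNNReal L hL
        calc ‖g (x + t • (y - x)) - g x‖ ≤ L * ‖x + t • (y - x) - x‖ := by
              rw [← h']; exact this
          _ = L * (t * ‖y - x‖) := by
              rw [add_sub_cancel_left, norm_smul, Real.norm_eq_abs,
                abs_of_pos ht.1]
      have hinner : ⟪g (x + t • (y - x)), y - x⟫ - ⟪g x, y - x⟫ ≤ L * t * M := by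
        rw [← inner_sub_left]
        calc ⟪g (x + t • (y - x)) - g x, y - x⟫
            ≤ ‖g (x + t • (y - x)) - g x‖ * ‖y - x‖ := hcs
          _ ≤ L * (t * ‖y - x‖) * ‖y - x‖ := by
              apply mul_le_mul_of_nonneg_right hlip (norm_nonneg _)
          _ = L * t * M := by rw [hM]; ring
      linarith
  have h01 := hanti (left_mem_Icc.2 zero_le_one) (right_mem_Icc.2 zero_le_one) zero_le_one
  simp only [hχ] at h01
  have h0 : x + (0:ℝ) • (y - x) = x := by simp
  have h1 : x + (1:ℝ) • (y - x) = y := by simp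
  rw [h0, h1] at h01
  simp only [one_pow, zero_pow, mul_zero, zero_mul, mul_one, sub_zero, one_mul] at h01
  linarith

lemma strong_grad {f : E → ℝ} {g : E → E} {μ : ℝ}
    (hsc : StrongConvexOn Set.univ μ f)
    (hg : ∀ w, HasGradientAt f (g w) w) (x y : E) :
    ⟪g x, y - x⟫ ≤ f y - f x - μ / 2 * ‖y - x‖ ^ 2 := by
  set φ : ℝ → ℝ := fun t => f (x + t • (y - x)) with hφ
  have hder : HasDerivAt φ ⟪g x, y - x⟫ 0 := by
    have := line_hasDerivAt hg x y 0
    simpa using this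
  have hslope : Tendsto (slope φ 0) (𝓝[>] (0:ℝ)) (𝓝 ⟪g x, y - x⟫) :=
    (hasDerivAt_iff_tendsto_slope.1 hder).mono_left
      (nhdsWithin_mono 0 (fun t ht => ne_of_gt ht))
  have hrhs : Tendsto (fun t : ℝ => f y - f x - (1 - t) * (μ / 2 * ‖x - y‖ ^ 2))
      (𝓝[>] (0:ℝ)) (𝓝 (f y - f x - μ / 2 * ‖x - y‖ ^ 2)) := by
    have : ContinuousAt (fun t : ℝ => f y - f x - (1 - t) * (μ / 2 * ‖x - y‖ ^ 2)) 0 := by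
      fun_prop
    have h2 := this.tendsto.mono_left (nhdsWithin_le_nhds (s := Ioi (0:ℝ)))
    simpa using h2
  have hle : ⟪g x, y - x⟫ ≤ f y - f x - μ / 2 * ‖x - y‖ ^ 2 := by
    refine le_of_tendsto_of_tendsto hslope hrhs ?_
    filter_upwards [Ioo_mem_nhdsGT_of_mem (by constructor <;> norm_num :
      (0:ℝ) ∈ Ico (0:ℝ) 1)] with t ht
    have hcvx := hsc.2 (mem_univ x) (mem_univ y) (by linarith [ht.2] : (0:ℝ) ≤ 1 - t)
      (le_of_lt ht.1) (by ring)
    have hcomb : (1 - t) • x + t • y = x + t • (y - x) := by module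
    rw [hcomb] at hcvx
    have hφt : φ t ≤ f x + t * (f y - f x) - (1 - t) * t * (μ / 2 * ‖x - y‖ ^ 2) := by
      simp only [smul_eq_mul] at hcvx
      calc φ t ≤ (1 - t) * f x + t * f y - (1 - t) * t * (μ / 2 * ‖x - y‖ ^ 2) := hcvx
        _ = f x + t * (f y - f x) - (1 - t) * t * (μ / 2 * ‖x - y‖ ^ 2) := by ring
    rw [slope_def_field, sub_zero, div_le_iff₀ ht.1]
    have hφ0 : φ 0 = f x := by simp [hφ]
    rw [hφ0]
    nlinarith [ht.1]
  rw [norm_sub_rev x y] at hle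
  exact hle

lemma innerJ (n : ℕ) (v : EuclideanSpace ℝ (Fin n ⊕ Fin n)) :
    ⟪v, Jmap n v⟫ = 0 := by
  simp only [PiLp.inner_apply, RCLike.inner_apply, conj_trivial]
  rw [Fintype.sum_sum_type]
  simp [Jmap, mul_comm]

lemma normJ (n : ℕ) (v : EuclideanSpace ℝ (Fin n ⊕ Fin n)) :
    ‖Jmap n v‖ = ‖v‖ := by
  rw [EuclideanSpace.norm_eq, EuclideanSpace.norm_eq]
  congr 1
  rw [Fintype.sum_sum_type, Fintype.sum_sum_type]
  simp [Jmap]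
  exact add_comm _ _

end Aux


set_option maxHeartbeats 1000000 in
/-- For the explicit discretization `z^{k+1} = z^k + ε(J∇H(z^k) + z⋆ − z^k)` of
an `L`-smooth, `μ`-strongly convex Hamiltonian, with `2ε = (L² + L/μ)⁻¹`, one
has `H(z^{k+1}) ≤ (1 − ε·μ/L)·H(z^k)`, hence linear convergence
`H(z^k) ≤ (1 − ε·μ/L)^k·H(z^0)`. -/
theorem stmt9 (n : ℕ)
    (H : EuclideanSpace ℝ (Fin n ⊕ Fin n) → ℝ)
    (L μ : ℝ) (hμ : 0 < μ) (hLμ : μ ≤ L)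
    (hsc : StrongConvexOn Set.univ μ H)
    (hH : ∀ w, HasGradientAt H (gradient H w) w)
    (hLip : LipschitzWith (Real.toNNReal L) (fun w => gradient H w))
    (zstar : EuclideanSpace ℝ (Fin n ⊕ Fin n))
    (hmin : H zstar = 0) (hnonneg : ∀ w, 0 ≤ H w)
    (ε : ℝ) (hε : 2 * ε = (L ^ 2 + L / μ)⁻¹)
    (z : ℕ → EuclideanSpace ℝ (Fin n ⊕ Fin n))
    (hrec : ∀ k, z (k + 1) =
      z k + ε • (Jmap n (gradient H (z k)) + zstar - z k)) :
    (∀ k, H (z (k + 1)) ≤ (1 - ε * μ / L) * H (z k)) ∧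
      ∀ k, H (z k) ≤ (1 - ε * μ / L) ^ k * H (z 0) := by
  have hL : 0 < L := lt_of_lt_of_le hμ hLμ
  have hA := descent_lemma hL.le hH hLip
  have hB := strong_grad hsc hH
  -- gradient vanishes at the minimizer
  have hg0 : gradient H zstar = 0 := by
    have hlm : IsLocalMin H zstar :=
      Filter.Eventually.of_forall (fun w => by rw [hmin]; exact hnonneg w)
    have h0 := hlm.hasFDerivAt_eq_zero (hH zstar).hasFDerivAt
    have h2 := congrArg (InnerProductSpace.toDual ℝ _).symm h0
    simpa [gradient] using h2
  have lower : ∀ x, μ / 2 * ‖x - zstar‖ ^ 2 ≤ H x := by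
    intro x
    have h := hB zstar x
    rw [hg0, hmin] at h
    simpa using h
  have upper : ∀ x, H x ≤ L / 2 * ‖x - zstar‖ ^ 2 := by
    intro x
    have h := hA zstar x
    rw [hg0, hmin] at h
    simpa using h
  have gradsq : ∀ x, ‖gradient H x‖ ^ 2 ≤ 2 * L * H x := by
    intro x
    have h1 := hA x (x - L⁻¹ • gradient H x)
    have h2 := hnonneg (x - L⁻¹ • gradient H x)
    have e1 : x - L⁻¹ • gradient H x - x = -(L⁻¹ • gradient H x) := by abel
    rw [e1, inner_neg_right, real_inner_smul_right,
      real_inner_self_eq_norm_sq, norm_neg, norm_smul, Real.norm_eq_abs,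
      abs_of_nonneg (inv_nonneg.2 hL.le), mul_pow] at h1
    have hcalc : L⁻¹ * ‖gradient H x‖ ^ 2 - L / 2 * (L⁻¹ ^ 2 * ‖gradient H x‖ ^ 2)
        = ‖gradient H x‖ ^ 2 / (2 * L) := by
      field_simp
      ring
    have h3 : ‖gradient H x‖ ^ 2 / (2 * L) ≤ H x := by linarith
    rw [div_le_iff₀ (by positivity : (0:ℝ) < 2 * L)] at h3
    linarith
  have hpos : 0 < L ^ 2 + L / μ := by positivity
  have hεpos : 0 < ε := by nlinarith [inv_pos.2 hpos, hε]
  have hsum : 2 * ε * (L ^ 2 + L / μ) = 1 := by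
    rw [hε]; exact inv_mul_cancel₀ hpos.ne'
  have hfac : 0 ≤ 1 - ε * μ / L := by
    have h2εL : 2 * ε * L ≤ μ := by
      have h5 : 2 * ε ≤ μ / L := by
        rw [hε, ← inv_div L μ]
        exact inv_anti₀ (div_pos hL hμ) (le_add_of_nonneg_left (sq_nonneg L))
      have := mul_le_mul_of_nonneg_right h5 hL.le
      rwa [div_mul_cancel₀ μ hL.ne'] at this
    rw [sub_nonneg, div_le_one hL]
    nlinarith [mul_le_mul_of_nonneg_left hLμ hεpos.le]
  have key : ∀ k, H (z (k + 1)) ≤ (1 - ε * μ / L) * H (z k) := by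
    intro k
    set x := z k with hx
    set g := gradient H x with hgdef
    set d := Jmap n g + zstar - x with hd
    have hHx0 : 0 ≤ H x := hnonneg x
    have h1 : H (z (k + 1)) ≤ H x + ε * ⟪g, d⟫ + L / 2 * (ε ^ 2 * ‖d‖ ^ 2) := by
      have h := hA x (x + ε • d)
      rw [add_sub_cancel_left, real_inner_smul_right, norm_smul,
        Real.norm_eq_abs, mul_pow, sq_abs] at h
      rw [hrec k]
      exact h
    have hip : ⟪g, d⟫ ≤ - H x - μ / 2 * ‖x - zstar‖ ^ 2 := by
      have hsplit : ⟪g, d⟫ = ⟪g, zstar - x⟫ := by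
        rw [hd, add_sub_assoc, inner_add_right, innerJ, zero_add]
      have h := hB x zstar
      rw [hmin, norm_sub_rev] at h
      rw [hsplit]; linarith
    have hdsq : ‖d‖ ^ 2 ≤ 2 * ‖g‖ ^ 2 + 2 * ‖x - zstar‖ ^ 2 := by
      have h : ‖d‖ ≤ ‖g‖ + ‖x - zstar‖ := by
        rw [hd, add_sub_assoc]
        calc ‖Jmap n g + (zstar - x)‖ ≤ ‖Jmap n g‖ + ‖zstar - x‖ := norm_add_le _ _
          _ = ‖g‖ + ‖x - zstar‖ := by rw [normJ, norm_sub_rev]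
      nlinarith [norm_nonneg d, norm_nonneg g, norm_nonneg (x - zstar),
        sq_nonneg (‖g‖ - ‖x - zstar‖)]
    have hgsq := gradsq x
    -- multiplied-through pieces (to avoid division atoms)
    have hμD : μ * H x ≤ L * (μ / 2 * ‖x - zstar‖ ^ 2) := by
      nlinarith [mul_le_mul_of_nonneg_left (upper x) hμ.le]
    have hLIP : L * ⟪g, d⟫ ≤ -(L * H x) - μ * H x := by
      nlinarith [mul_le_mul_of_nonneg_left hip hL.le, hμD]
    have hμND : μ * ‖d‖ ^ 2 ≤ (4 * L * μ + 4) * H x := by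
      have hl := lower x
      nlinarith [mul_le_mul_of_nonneg_left hdsq hμ.le,
        mul_le_mul_of_nonneg_left hgsq hμ.le]
    have e2' : L * (L / 2 * (ε ^ 2 * ‖d‖ ^ 2)) ≤ ε * L * H x := by
      have hmono : (L ^ 2 / 2 * ε ^ 2) * (μ * ‖d‖ ^ 2)
          ≤ (L ^ 2 / 2 * ε ^ 2) * ((4 * L * μ + 4) * H x) :=
        mul_le_mul_of_nonneg_left hμND (by positivity)
      have hco : (L ^ 2 / 2 * ε ^ 2) * (4 * L * μ + 4)
          = μ * (ε * L) * (2 * ε * (L ^ 2 + L / μ)) := by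
        field_simp
        ring
      have hco2 : (L ^ 2 / 2 * ε ^ 2) * (4 * L * μ + 4) = μ * (ε * L) := by
        rw [hco, hsum, mul_one]
      have hmul : μ * (L * (L / 2 * (ε ^ 2 * ‖d‖ ^ 2))) ≤ μ * (ε * L * H x) := by
        calc μ * (L * (L / 2 * (ε ^ 2 * ‖d‖ ^ 2)))
            = (L ^ 2 / 2 * ε ^ 2) * (μ * ‖d‖ ^ 2) := by ring
          _ ≤ (L ^ 2 / 2 * ε ^ 2) * ((4 * L * μ + 4) * H x) := hmono
          _ = (L ^ 2 / 2 * ε ^ 2) * (4 * L * μ + 4) * H x := by ring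
          _ = μ * (ε * L) * H x := by rw [hco2]
          _ = μ * (ε * L * H x) := by ring
      exact le_of_mul_le_mul_left hmul hμ
    have hfin : L * H (z (k + 1)) ≤ L * H x - ε * μ * H x := by
      have hL1 := mul_le_mul_of_nonneg_left h1 hL.le
      have he1 := mul_le_mul_of_nonneg_left hLIP hεpos.le
      nlinarith [hL1, he1, e2']
    have hgoal : (1 - ε * μ / L) * H x = (L * H x - ε * μ * H x) / L := by
      field_simp
    rw [hgoal, le_div_iff₀ hL]
    nlinarith [hfin]
  refine ⟨key, ?_⟩
  intro k
  induction k with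
  | zero => simp
  | succ k ih =>
    calc H (z (k + 1)) ≤ (1 - ε * μ / L) * H (z k) := key k
      _ ≤ (1 - ε * μ / L) * ((1 - ε * μ / L) ^ k * H (z 0)) :=
          mul_le_mul_of_nonneg_left ih hfac
      _ = (1 - ε * μ / L) ^ (k + 1) * H (z 0) := by ring
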